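/- The set of maximal elements of a nonempty finite M♮-convex set of nonnegative integer vectors is an M-convex set. -/

import Mathlib

/-- Unit vector at coordinate `i`. -/
def unitv {I : Type*} [DecidableEq I] (i : I) : I → ℤ := fun k => if k = i then 1 else 0

/-- `Ξ` is an M♮-convex set of integer vectors. -/
def MNatConvex {I : Type*} [DecidableEq I] (Ξ : Set (I → ℤ)) : Prop :=
  ∀ ξ ∈ Ξ, ∀ ξ' ∈ Ξ, ∀ i : I, ξ' i < ξ i →
    ((ξ - unitv i ∈ Ξ ∧ ξ' + unitv i ∈ Ξ) ∨
      ∃ j : I, ξ j < ξ' j ∧ ξ - unitv i + unitv j ∈ Ξ ∧ ξ' + unitv i - unitv j ∈ Ξ)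

/-- `Ξ` is an M-convex set of integer vectors. -/
def MConvex {I : Type*} [DecidableEq I] (Ξ : Set (I → ℤ)) : Prop :=
  ∀ ξ ∈ Ξ, ∀ ξ' ∈ Ξ, ∀ i : I, ξ' i < ξ i →
    ∃ j : I, ξ j < ξ' j ∧ ξ - unitv i + unitv j ∈ Ξ ∧ ξ' + unitv i - unitv j ∈ Ξ

lemma sum_unitv {I : Type*} [Fintype I] [DecidableEq I] (i : I) :
    ∑ k, unitv i k = 1 := by
  simp [unitv]

lemma le_add_unitv {I : Type*} [DecidableEq I] (ξ : I → ℤ) (i : I) : ξ ≤ ξ + unitv i := by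
  intro k
  simp only [Pi.add_apply, unitv]
  split <;> omega

lemma add_unitv_ne {I : Type*} [DecidableEq I] (ξ : I → ℤ) (i : I) : ξ + unitv i ≠ ξ := by
  intro h
  have := congrFun h i
  simp [unitv] at this

/-- the set of maximal elements (w.r.t. the componentwise order) of a
nonempty finite M♮-convex set of nonnegative integer vectors is M-convex. -/
theorem maximal_of_MNatConvex_is_MConvex {I : Type*} [Fintype I] [DecidableEq I]
    (Ξ : Set (I → ℤ)) (hfin : Ξ.Finite) (hne : Ξ.Nonempty)
    (hpos : ∀ ξ ∈ Ξ, ∀ i, 0 ≤ ξ i) (hM : MNatConvex Ξ) :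
    MConvex {ξ | ξ ∈ Ξ ∧ ∀ ξ' ∈ Ξ, ξ ≤ ξ' → ξ' = ξ} := by
  classical
  set S : (I → ℤ) → ℤ := fun ξ => ∑ k, ξ k with hSdef
  obtain ⟨ξ₀, hξ₀, hmax0⟩ := hfin.exists_maximalFor S Ξ hne
  -- S ξ₀ is the maximum sum
  have hsle : ∀ ξ ∈ Ξ, S ξ ≤ S ξ₀ := by
    intro ξ hξ
    rcases le_total (S ξ) (S ξ₀) with h | h
    · exact h
    · exact hmax0 hξ h
  -- elements with maximum sum are maximal
  have hA : ∀ η ∈ Ξ, S η = S ξ₀ → ∀ ξ' ∈ Ξ, η ≤ ξ' → ξ' = η := by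
    intro η hη hSη ξ' hξ' hle
    by_contra hne'
    have : ∃ k, η k < ξ' k := by
      by_contra hall
      push_neg at hall
      exact hne' (le_antisymm (fun k => hall k) hle)
    obtain ⟨k, hk⟩ := this
    have hlt : S η < S ξ' :=
      Finset.sum_lt_sum (fun t _ => hle t) ⟨k, Finset.mem_univ k, hk⟩
    have := hsle ξ' hξ'
    omega
  -- every maximal element has maximum sum
  have hB : ∀ ξ' ∈ Ξ, (∀ ζ ∈ Ξ, ξ' ≤ ζ → ζ = ξ') → S ξ' = S ξ₀ := by
    intro ξ' hξ' hmax'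
    by_contra hneq
    have hlt : S ξ' < S ξ₀ := lt_of_le_of_ne (hsle ξ' hξ') hneq
    set A : Set (I → ℤ) := {ξ ∈ Ξ | S ξ = S ξ₀} with hAdef
    have hAfin : A.Finite := hfin.subset (fun x hx => hx.1)
    have hAne : A.Nonempty := ⟨ξ₀, hξ₀, rfl⟩
    obtain ⟨ξ, hξA, hξmin⟩ :=
      hAfin.exists_maximalFor (fun ζ => -(∑ k, |ζ k - ξ' k|)) A hAne
    obtain ⟨hξ, hSξ⟩ := hξA
    have hSgt : S ξ' < S ξ := by omega
    have hi : ∃ i, ξ' i < ξ i := by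
      by_contra hall
      push_neg at hall
      have : S ξ ≤ S ξ' := Finset.sum_le_sum (fun t _ => hall t)
      omega
    obtain ⟨i, hi⟩ := hi
    rcases hM ξ hξ ξ' hξ' i hi with ⟨_, h2⟩ | ⟨j, hj, hin, _⟩
    · exact add_unitv_ne ξ' i (hmax' _ h2 (le_add_unitv ξ' i))
    · have hij : i ≠ j := by intro h; subst h; omega
      set ξt : I → ℤ := ξ - unitv i + unitv j with hξt
      have hco : ∀ k, ξt k = ξ k - (if k = i then 1 else 0) + (if k = j then 1 else 0) := by
        intro k; simp [hξt, unitv]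
      have hSt : S ξt = S ξ := by
        simp only [hSdef, hξt]
        simp [Finset.sum_add_distrib, Finset.sum_sub_distrib, sum_unitv,
          show (∑ k, unitv i k) = 1 from sum_unitv i]
      have hdist : ∑ k, |ξt k - ξ' k| < ∑ k, |ξ k - ξ' k| := by
        apply Finset.sum_lt_sum
        · intro k _
          rcases eq_or_ne k i with rfl | hki
          · rw [hco, if_pos rfl, if_neg hij]
            rw [abs_of_nonneg (by omega), abs_of_nonneg (by omega)]
            omega
          rcases eq_or_ne k j with rfl | hkj
          · rw [hco, if_neg hki, if_pos rfl]
            rw [abs_of_nonpos (by omega), abs_of_nonpos (by omega)]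
            omega
          · rw [hco, if_neg hki, if_neg hkj]; ring_nf; exact le_refl _
        · refine ⟨i, Finset.mem_univ i, ?_⟩
          rw [hco, if_pos rfl, if_neg hij]
          rw [abs_of_nonneg (by omega), abs_of_nonneg (by omega)]
          omega
      have hξtA : ξt ∈ A := ⟨hin, by omega⟩
      have := hξmin hξtA (by dsimp only; omega)
      dsimp only at this; omega
  -- the main proof
  intro ξ hξ ξ' hξ' i hi
  obtain ⟨hξΞ, hξmax⟩ := hξ
  obtain ⟨hξ'Ξ, hξ'max⟩ := hξ'
  rcases hM ξ hξΞ ξ' hξ'Ξ i hi with ⟨_, h2⟩ | ⟨j, hj, hin1, hin2⟩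
  · exact absurd (hξ'max _ h2 (le_add_unitv ξ' i)) (add_unitv_ne ξ' i)
  · refine ⟨j, hj, ⟨hin1, hA _ hin1 ?_⟩, ⟨hin2, hA _ hin2 ?_⟩⟩
    · have h1 : S (ξ - unitv i + unitv j) = S ξ := by
        simp [hSdef, Finset.sum_add_distrib, Finset.sum_sub_distrib, sum_unitv]
      rw [h1]; exact hB ξ hξΞ hξmax
    · have h2 : S (ξ' + unitv i - unitv j) = S ξ' := by
        simp [hSdef, Finset.sum_add_distrib, Finset.sum_sub_distrib, sum_unitv]
      rw [h2]; exact hB ξ' hξ'Ξ hξ'max
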